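/- arXiv:1509.03532 — 2 statements merged into one kernel-verified Lean document; each statement's English description precedes it below -/
import Mathlib

section
/- Let r : C1 → C2 be an F-linear exact (triangulated) functor between F-linear triangulated categories equipped with weight structures. Assume (1) r is weight exact, and (2) the induced functor r_{w=0} : C_{1,w=0} → C_{2,w=0} on hearts is full. Then r maps minimal weight filtrations to minimal weight filtrations: if M_{≤n-1} → M → M_{≥n} →(δ) M_{≤n-1}[1] is a minimal weight filtration of M ∈ C1 concentrated at n ∈ ℤ, then its image under r is a minimal weight filtration of r(M) concentrated at n. -/
open CategoryTheory CategoryTheory.Limits CategoryTheory.Pretriangulated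

namespace Paper

/-- A morphism `f : X ⟶ Y` belongs to the radical of a preadditive category if,
for every `g : Y ⟶ X`, the endomorphism `𝟙 X - g ∘ f` is invertible. -/
def InRadical {C : Type*} [Category C] [Preadditive C] {X Y : C} (f : X ⟶ Y) : Prop :=
  ∀ g : Y ⟶ X, IsIso (𝟙 X - f ≫ g)

/-- The Jacobson radical of a (possibly noncommutative) ring, as a two-sided ideal. -/
def ringRadical (R : Type*) [Ring R] : TwoSidedIdeal R :=
  TwoSidedIdeal.jacobson ⊥

/-- A ring is semi-primary if its (Jacobson) radical is nilpotent and the quotient by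
the radical is a semisimple ring. -/
def IsSemiprimaryRing (R : Type*) [Ring R] : Prop :=
  IsSemisimpleRing (ringRadical R).ringCon.Quotient ∧
    ∃ n : ℕ, ∀ f : Fin n → R, (∀ i, f i ∈ ringRadical R) → (List.ofFn f).prod = 0

/-- A class of objects of a preadditive category is semi-primary (André–Kahn) if the
endomorphism ring of each of its objects is a semi-primary ring; for an object `X`,
the radical ideal `rad(X,X)` is exactly the Jacobson radical of `End X`. -/
def SemiprimaryOn {C : Type*} [Category C] [Preadditive C] (P : Set C) : Prop :=
  ∀ X : C, X ∈ P → IsSemiprimaryRing (CategoryTheory.End X)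

/-- A class of objects is pseudo-Abelian (idempotent complete) if every idempotent
endomorphism of one of its objects splits through an object of the class. -/
def PseudoAbelianOn {C : Type*} [Category C] [Preadditive C] (P : Set C) : Prop :=
  ∀ X : C, X ∈ P → ∀ e : X ⟶ X, e ≫ e = e →
    ∃ (Y : C) (_ : Y ∈ P) (p : X ⟶ Y) (i : Y ⟶ X), p ≫ i = e ∧ i ≫ p = 𝟙 Y

variable (C : Type*) [Category C] [Preadditive C] [HasZeroObject C] [HasShift C ℤ]
  [∀ n : ℤ, (CategoryTheory.shiftFunctor C n).Additive] [Pretriangulated C]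

/-- A weight structure on a pretriangulated category: classes `le = C_{w≤0}` and
`ge = C_{w≥0}`, additive (containing zero objects, closed under finite direct sums)
and closed under retracts, with `C_{w≤0} ⊆ C_{w≤1}`, `C_{w≥1} ⊆ C_{w≥0}`,
orthogonality, and existence of weight decompositions. -/
structure WeightStructure where
  le : Set C
  ge : Set C
  le_retract : ∀ {X Y : C} (i : X ⟶ Y) (p : Y ⟶ X), i ≫ p = 𝟙 X → Y ∈ le → X ∈ le
  ge_retract : ∀ {X Y : C} (i : X ⟶ Y) (p : Y ⟶ X), i ≫ p = 𝟙 X → Y ∈ ge → X ∈ ge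
  le_zero : ∀ X : C, IsZero X → X ∈ le
  ge_zero : ∀ X : C, IsZero X → X ∈ ge
  le_add : ∀ {X Y : C} (b : BinaryBicone X Y), b.IsBilimit → X ∈ le → Y ∈ le → b.pt ∈ le
  ge_add : ∀ {X Y : C} (b : BinaryBicone X Y), b.IsBilimit → X ∈ ge → Y ∈ ge → b.pt ∈ ge
  le_shift : ∀ X : C, X ∈ le → X⟦(-1 : ℤ)⟧ ∈ le
  ge_shift : ∀ X : C, X ∈ ge → X⟦(1 : ℤ)⟧ ∈ ge
  orthogonal : ∀ {X Y : C}, X ∈ le → Y⟦(-1 : ℤ)⟧ ∈ ge → ∀ f : X ⟶ Y, f = 0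
  exists_decomp : ∀ M : C, ∃ (A B : C) (f : A ⟶ M) (g : M ⟶ B) (h : B ⟶ A⟦(1 : ℤ)⟧),
    (Triangle.mk f g h ∈ distTriang C) ∧ A ∈ le ∧ B⟦(-1 : ℤ)⟧ ∈ ge

namespace WeightStructure

variable {C} (w : WeightStructure C)

/-- `C_{w ≤ n} := C_{w ≤ 0}[n]`. -/
def leN (n : ℤ) : Set C := {X : C | X⟦-n⟧ ∈ w.le}

/-- `C_{w ≥ n} := C_{w ≥ 0}[n]`. -/
def geN (n : ℤ) : Set C := {X : C | X⟦-n⟧ ∈ w.ge}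

/-- The heart `C_{w = 0} = C_{w ≤ 0} ∩ C_{w ≥ 0}`. -/
def heart : Set C := w.leN 0 ∩ w.geN 0

/-- The weight structure is bounded if every object lies in
`C_{w ≥ m} ∩ C_{w ≤ n}` for some integers `m ≤ n`. -/
def Bounded : Prop := ∀ M : C, ∃ m n : ℤ, m ≤ n ∧ M ∈ w.geN m ∧ M ∈ w.leN n

end WeightStructure

/-- A weight filtration of `M` concentrated at `n`: an exact triangle
`M_{≤ n-1} ⟶ M ⟶ M_{≥ n} ⟶(δ) M_{≤ n-1}[1]` with the two outer terms in
`C_{w ≤ n-1}` and `C_{w ≥ n}` respectively. -/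
def IsWeightFiltrationAt {C : Type*} [Category C] [Preadditive C] [HasZeroObject C]
    [HasShift C ℤ] [∀ n : ℤ, (CategoryTheory.shiftFunctor C n).Additive] [Pretriangulated C]
    (w : WeightStructure C) (n : ℤ) {A M B : C}
    (f : A ⟶ M) (g : M ⟶ B) (δ : B ⟶ A⟦(1 : ℤ)⟧) : Prop :=
  (Triangle.mk f g δ ∈ distTriang C) ∧ A ∈ w.leN (n - 1) ∧ B ∈ w.geN n

/-- A minimal weight filtration concentrated at `n`: a weight filtration concentrated
at `n` whose connecting morphism lies in the radical. -/
def IsMinimalWeightFiltrationAt {C : Type*} [Category C] [Preadditive C] [HasZeroObject C]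
    [HasShift C ℤ] [∀ n : ℤ, (CategoryTheory.shiftFunctor C n).Additive] [Pretriangulated C]
    (w : WeightStructure C) (n : ℤ) {A M B : C}
    (f : A ⟶ M) (g : M ⟶ B) (δ : B ⟶ A⟦(1 : ℤ)⟧) : Prop :=
  IsWeightFiltrationAt w n f g δ ∧ InRadical δ

/-- `M` is without weights `α, α+1, …, β` if it admits a weight filtration avoiding
these weights. -/
def WithoutWeights {C : Type*} [Category C] [Preadditive C] [HasZeroObject C]
    [HasShift C ℤ] [∀ n : ℤ, (CategoryTheory.shiftFunctor C n).Additive] [Pretriangulated C]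
    (w : WeightStructure C) (α β : ℤ) (M : C) : Prop :=
  ∃ (A B : C) (f : A ⟶ M) (g : M ⟶ B) (δ : B ⟶ A⟦(1 : ℤ)⟧),
    (Triangle.mk f g δ ∈ distTriang C) ∧ A ∈ w.leN (α - 1) ∧ B ∈ w.geN (β + 1)

/-- A functor is weight exact if it respects both classes of the weight structures. -/
def WeightExact {C₁ : Type*} [Category C₁] [Preadditive C₁] [HasZeroObject C₁] [HasShift C₁ ℤ]
    [∀ n : ℤ, (CategoryTheory.shiftFunctor C₁ n).Additive] [Pretriangulated C₁]
    {C₂ : Type*} [Category C₂] [Preadditive C₂] [HasZeroObject C₂] [HasShift C₂ ℤ]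
    [∀ n : ℤ, (CategoryTheory.shiftFunctor C₂ n).Additive] [Pretriangulated C₂]
    (w₁ : WeightStructure C₁) (w₂ : WeightStructure C₂) (r : C₁ ⥤ C₂) : Prop :=
  (∀ X : C₁, X ∈ w₁.le → r.obj X ∈ w₂.le) ∧ (∀ X : C₁, X ∈ w₁.ge → r.obj X ∈ w₂.ge)


section Aux

variable {C : Type*} [Category C] [Preadditive C] [HasZeroObject C] [HasShift C ℤ]
  [∀ n : ℤ, (CategoryTheory.shiftFunctor C n).Additive] [Pretriangulated C]

lemma le_iso (w : WeightStructure C) {X Y : C} (e : X ≅ Y) (h : Y ∈ w.le) : X ∈ w.le :=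
  w.le_retract e.hom e.inv e.hom_inv_id h

lemma ge_iso (w : WeightStructure C) {X Y : C} (e : X ≅ Y) (h : Y ∈ w.ge) : X ∈ w.ge :=
  w.ge_retract e.hom e.inv e.hom_inv_id h

lemma orth_neg (w : WeightStructure C) {X Y : C} (hX : X⟦(1:ℤ)⟧ ∈ w.le) (hY : Y ∈ w.ge)
    (f : X ⟶ Y) : f = 0 := by
  have h : (Y⟦(1:ℤ)⟧)⟦(-1:ℤ)⟧ ∈ w.ge :=
    ge_iso w ((shiftFunctorCompIsoId C (1:ℤ) (-1:ℤ) (by ring)).app Y) hY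
  have h0 := w.orthogonal hX h ((shiftFunctor C (1:ℤ)).map f)
  exact (shiftFunctor C (1:ℤ)).map_eq_zero_iff.mp h0

lemma le_ext (w : WeightStructure C) {T : Triangle C} (hT : T ∈ distTriang C)
    (h₁ : T.obj₁ ∈ w.le) (h₃ : T.obj₃ ∈ w.le) : T.obj₂ ∈ w.le := by
  obtain ⟨A, B, a, b, c, hD, hA, hB⟩ := w.exists_decomp T.obj₂
  have hb : b = 0 := by
    have h1 : T.mor₁ ≫ b = 0 := w.orthogonal h₁ hB _
    obtain ⟨u, hu⟩ := Triangle.yoneda_exact₂ T hT b h1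
    rw [hu, w.orthogonal h₃ hB u, comp_zero]
  obtain ⟨s, hs⟩ := Triangle.coyoneda_exact₂ _ hD (𝟙 T.obj₂)
    (by show 𝟙 T.obj₂ ≫ b = 0; rw [hb, comp_zero])
  exact w.le_retract s a hs.symm hA

lemma exists_decomp_neg (w : WeightStructure C) (M : C) :
    ∃ (L G : C) (a : L ⟶ M) (b : M ⟶ G) (c : G ⟶ L⟦(1:ℤ)⟧),
      (Triangle.mk a b c ∈ distTriang C) ∧ L⟦(1:ℤ)⟧ ∈ w.le ∧ G ∈ w.ge := by
  obtain ⟨A, B, a, b, c, hD, hA, hB⟩ := w.exists_decomp (M⟦(1:ℤ)⟧)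
  have hT' := Triangle.shift_distinguished _ hD (-1)
  set T' := (CategoryTheory.shiftFunctor (Triangle C) (-1 : ℤ)).obj (Triangle.mk a b c) with hT'def
  let e : T'.obj₂ ≅ M := (shiftFunctorCompIsoId C (1:ℤ) (-1:ℤ) (by ring)).app M
  refine ⟨T'.obj₁, T'.obj₃, T'.mor₁ ≫ e.hom, e.inv ≫ T'.mor₂, T'.mor₃, ?_, ?_, ?_⟩
  · refine isomorphic_distinguished _ hT' _ ?_
    exact Triangle.isoMk _ _ (Iso.refl _) e.symm (Iso.refl _)
      (by show (T'.mor₁ ≫ e.hom) ≫ e.inv = 𝟙 T'.obj₁ ≫ T'.mor₁; simp)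
      (by show (e.inv ≫ T'.mor₂) ≫ 𝟙 T'.obj₃ = e.inv ≫ T'.mor₂; simp)
      (by show T'.mor₃ ≫ (shiftFunctor C (1:ℤ)).map (𝟙 T'.obj₁) = 𝟙 T'.obj₃ ≫ T'.mor₃; simp)
  · exact le_iso w ((shiftFunctorCompIsoId C (-1:ℤ) (1:ℤ) (by ring)).app A) hA
  · exact hB

lemma ge_ext (w : WeightStructure C) {T : Triangle C} (hT : T ∈ distTriang C)
    (h₁ : T.obj₁ ∈ w.ge) (h₃ : T.obj₃ ∈ w.ge) : T.obj₂ ∈ w.ge := by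
  obtain ⟨L, G, a, b, c, hD, hL, hG⟩ := exists_decomp_neg w T.obj₂
  have ha : a = 0 := by
    have h1 : a ≫ T.mor₂ = 0 := orth_neg w hL h₃ _
    obtain ⟨u, hu⟩ := Triangle.coyoneda_exact₂ T hT a h1
    rw [hu, orth_neg w hL h₁ u, zero_comp]
  obtain ⟨t, ht⟩ := Triangle.yoneda_exact₂ _ hD (𝟙 T.obj₂)
    (by show a ≫ 𝟙 T.obj₂ = 0; rw [ha, zero_comp])
  exact w.ge_retract b t ht.symm hG

lemma exists_decomp_of_le (w : WeightStructure C) {X : C} (hX : X ∈ w.le) :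
    ∃ (L X₀ : C) (a : L ⟶ X) (π : X ⟶ X₀) (c : X₀ ⟶ L⟦(1:ℤ)⟧),
      (Triangle.mk a π c ∈ distTriang C) ∧ L⟦(1:ℤ)⟧ ∈ w.le ∧ X₀ ∈ w.le ∧ X₀ ∈ w.ge := by
  obtain ⟨L, G, a, b, c, hD, hL, hG⟩ := exists_decomp_neg w X
  exact ⟨L, G, a, b, c, hD, hL, le_ext w (rot_of_distTriang _ hD) hX hL, hG⟩

lemma exists_decomp_of_ge (w : WeightStructure C) {Y : C} (hY : Y ∈ w.ge) :
    ∃ (Y₀ G : C) (ι : Y₀ ⟶ Y) (q : Y ⟶ G) (c : G ⟶ Y₀⟦(1:ℤ)⟧),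
      (Triangle.mk ι q c ∈ distTriang C) ∧ Y₀ ∈ w.le ∧ Y₀ ∈ w.ge ∧ G⟦(-1:ℤ)⟧ ∈ w.ge := by
  obtain ⟨A, B, a, b, c, hD, hA, hB⟩ := w.exists_decomp Y
  exact ⟨A, B, a, b, c, hD, hA, ge_ext w (inv_rot_of_distTriang _ hD) hB hY, hB⟩

lemma mem_heart (w : WeightStructure C) {X : C} (h1 : X ∈ w.le) (h2 : X ∈ w.ge) :
    X ∈ w.heart := by
  constructor
  · show X⟦-(0:ℤ)⟧ ∈ w.le
    exact le_iso w ((shiftFunctorZero' C (-(0:ℤ)) (by ring)).app X) h1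
  · show X⟦-(0:ℤ)⟧ ∈ w.ge
    exact ge_iso w ((shiftFunctorZero' C (-(0:ℤ)) (by ring)).app X) h2

lemma shift_mem_leN (w : WeightStructure C) {X : C} {m : ℤ} (k n : ℤ) (hk : m + k = n)
    (hX : X ∈ w.leN m) : X⟦k⟧ ∈ w.leN n := by
  show (X⟦k⟧)⟦-n⟧ ∈ w.le
  exact le_iso w ((shiftFunctorAdd' C k (-n) (-m) (by omega)).app X).symm hX

end Aux

section Main

variable {C₁ : Type*} [Category C₁] [Preadditive C₁] [HasZeroObject C₁] [HasShift C₁ ℤ]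
  [∀ n : ℤ, (CategoryTheory.shiftFunctor C₁ n).Additive] [Pretriangulated C₁]
  {C₂ : Type*} [Category C₂] [Preadditive C₂] [HasZeroObject C₂] [HasShift C₂ ℤ]
  [∀ n : ℤ, (CategoryTheory.shiftFunctor C₂ n).Additive] [Pretriangulated C₂]
  (w₁ : WeightStructure C₁) (w₂ : WeightStructure C₂)
  (r : C₁ ⥤ C₂) [r.Additive] [r.CommShift ℤ] [r.IsTriangulated]

lemma map_mem_leN (hwe : WeightExact w₁ w₂ r) {X : C₁} {n : ℤ} (hX : X ∈ w₁.leN n) :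
    r.obj X ∈ w₂.leN n := by
  show (r.obj X)⟦-n⟧ ∈ w₂.le
  exact le_iso w₂ ((r.commShiftIso (-n)).app X).symm (hwe.1 _ hX)

lemma map_mem_geN (hwe : WeightExact w₁ w₂ r) {X : C₁} {n : ℤ} (hX : X ∈ w₁.geN n) :
    r.obj X ∈ w₂.geN n := by
  show (r.obj X)⟦-n⟧ ∈ w₂.ge
  exact ge_iso w₂ ((r.commShiftIso (-n)).app X).symm (hwe.2 _ hX)

lemma lift_le_ge (hwe : WeightExact w₁ w₂ r)
    (hfull : ∀ X Y : C₁, X ∈ w₁.heart → Y ∈ w₁.heart →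
      ∀ g : r.obj X ⟶ r.obj Y, ∃ f : X ⟶ Y, r.map f = g)
    {X Y : C₁} (hX : X ∈ w₁.le) (hY : Y ∈ w₁.ge) (g : r.obj X ⟶ r.obj Y) :
    ∃ f : X ⟶ Y, r.map f = g := by
  obtain ⟨L, X₀, a, π, c, hD, hL, hX₀le, hX₀ge⟩ := exists_decomp_of_le w₁ hX
  obtain ⟨Y₀, G, ι, q, c', hD', hY₀le, hY₀ge, hG⟩ := exists_decomp_of_ge w₁ hY
  have hDT := r.map_distinguished _ hD
  have hDT' := r.map_distinguished _ hD'
  have h1 : r.map a ≫ g = 0 := by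
    refine orth_neg w₂ ?_ (hwe.2 _ hY) _
    exact le_iso w₂ ((r.commShiftIso (1:ℤ)).app L).symm (hwe.1 _ hL)
  obtain ⟨g₁, hg₁⟩ := Triangle.yoneda_exact₂ _ hDT g h1
  have h2 : g₁ ≫ r.map q = 0 := by
    refine w₂.orthogonal (hwe.1 _ hX₀le) ?_ _
    exact ge_iso w₂ ((r.commShiftIso (-1:ℤ)).app G).symm (hwe.2 _ hG)
  obtain ⟨g₂, hg₂⟩ := Triangle.coyoneda_exact₂ _ hDT' g₁ h2
  obtain ⟨h'', hh⟩ := hfull X₀ Y₀ (mem_heart w₁ hX₀le hX₀ge) (mem_heart w₁ hY₀le hY₀ge) g₂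
  refine ⟨π ≫ h'' ≫ ι, ?_⟩
  rw [hg₁, hg₂, ← hh]
  simp [Functor.mapTriangle]
  rfl

lemma lift_leN_geN (hwe : WeightExact w₁ w₂ r)
    (hfull : ∀ X Y : C₁, X ∈ w₁.heart → Y ∈ w₁.heart →
      ∀ g : r.obj X ⟶ r.obj Y, ∃ f : X ⟶ Y, r.map f = g)
    (n : ℤ) {X Y : C₁} (hX : X ∈ w₁.leN n) (hY : Y ∈ w₁.geN n) (g : r.obj X ⟶ r.obj Y) :
    ∃ f : X ⟶ Y, r.map f = g := by
  have hX' : X⟦-n⟧ ∈ w₁.le := hX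
  have hY' : Y⟦-n⟧ ∈ w₁.ge := hY
  obtain ⟨f', hf'⟩ := lift_le_ge w₁ w₂ r hwe hfull hX' hY'
    ((r.commShiftIso (-n)).hom.app X ≫ g⟦-n⟧' ≫ (r.commShiftIso (-n)).inv.app Y)
  obtain ⟨f, hf⟩ := (shiftFunctor C₁ (-n)).map_surjective f'
  refine ⟨f, (shiftFunctor C₂ (-n)).map_injective ?_⟩
  have hnat := r.commShiftIso_hom_naturality f (-n)
  rw [hf, hf'] at hnat
  have h2 : (r.commShiftIso (-n)).hom.app X ≫ (r.map f)⟦(-n)⟧' =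
      (r.commShiftIso (-n)).hom.app X ≫ g⟦(-n)⟧' := by
    rw [← hnat]
    simp
  exact (cancel_epi ((r.commShiftIso (-n)).hom.app X)).mp h2

end Main


theorem statement1
    (F : Type*) [Field F] [CharZero F]
    {C₁ : Type*} [Category C₁] [Preadditive C₁] [HasZeroObject C₁] [HasShift C₁ ℤ]
    [∀ n : ℤ, (CategoryTheory.shiftFunctor C₁ n).Additive] [Pretriangulated C₁] [CategoryTheory.Linear F C₁]
    {C₂ : Type*} [Category C₂] [Preadditive C₂] [HasZeroObject C₂] [HasShift C₂ ℤ]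
    [∀ n : ℤ, (CategoryTheory.shiftFunctor C₂ n).Additive] [Pretriangulated C₂] [CategoryTheory.Linear F C₂]
    (w₁ : WeightStructure C₁) (w₂ : WeightStructure C₂)
    (r : C₁ ⥤ C₂) [r.Additive] [Functor.Linear F r] [r.CommShift ℤ] [r.IsTriangulated]
    (hwe : WeightExact w₁ w₂ r)
    (hfull : ∀ X Y : C₁, X ∈ w₁.heart → Y ∈ w₁.heart →
      ∀ g : r.obj X ⟶ r.obj Y, ∃ f : X ⟶ Y, r.map f = g)
    (n : ℤ) {A M B : C₁} (f : A ⟶ M) (g : M ⟶ B) (δ : B ⟶ A⟦(1 : ℤ)⟧)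
    (hmin : IsMinimalWeightFiltrationAt w₁ n f g δ) :
    IsMinimalWeightFiltrationAt w₂ n (r.map f) (r.map g)
      (r.map δ ≫ (r.commShiftIso (1 : ℤ)).hom.app A) := by
  obtain ⟨⟨hdist, hA, hB⟩, hrad⟩ := hmin
  refine ⟨⟨r.map_distinguished _ hdist, map_mem_leN w₁ w₂ r hwe hA, map_mem_geN w₁ w₂ r hwe hB⟩, ?_⟩
  intro u
  have hA1 : A⟦(1:ℤ)⟧ ∈ w₁.leN n := shift_mem_leN w₁ 1 n (by ring) hA
  obtain ⟨v, hv⟩ := lift_leN_geN w₁ w₂ r hwe hfull n hA1 hB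
    ((r.commShiftIso (1:ℤ)).hom.app A ≫ u)
  have heq : 𝟙 (r.obj B) - (r.map δ ≫ (r.commShiftIso (1:ℤ)).hom.app A) ≫ u =
      r.map (𝟙 B - δ ≫ v) := by
    rw [r.map_sub, r.map_id, r.map_comp, hv]
    simp
  rw [heq]
  have := hrad v
  infer_instance

end Paper
end

section
/- Let r : C1 → C2 be an F-linear exact (triangulated) functor between F-linear triangulated categories equipped with weight structures. Assume: (1) the weight structure on C1 is bounded; (2) the heart C_{1,w=0} is semi-primary and pseudo-Abelian; (3) r is weight exact; (4) the induced functor r_{w=0} on hearts is full; (5) r_{w=0} is conservative. Then for any M ∈ C1 and any integer α: M lies in C_{1,w≤α} if and only if r(M) lies in C_{2,w≤α}. -/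
open CategoryTheory CategoryTheory.Limits CategoryTheory.Pretriangulated

namespace Paper

variable (C : Type*) [Category C] [Preadditive C] [HasZeroObject C] [HasShift C ℤ]
  [∀ n : ℤ, (CategoryTheory.shiftFunctor C n).Additive] [Pretriangulated C]

section Helpers

variable {C : Type*} [Category C] [Preadditive C] [HasZeroObject C] [HasShift C ℤ]
  [∀ n : ℤ, (CategoryTheory.shiftFunctor C n).Additive] [Pretriangulated C]

namespace WeightStructure

variable (w : WeightStructure C)

lemma le_iso {X Y : C} (e : X ≅ Y) (hY : Y ∈ w.le) : X ∈ w.le :=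
  w.le_retract e.hom e.inv e.hom_inv_id hY

lemma ge_iso {X Y : C} (e : X ≅ Y) (hY : Y ∈ w.ge) : X ∈ w.ge :=
  w.ge_retract e.hom e.inv e.hom_inv_id hY

lemma leN_retract {n : ℤ} {X Y : C} (i : X ⟶ Y) (p : Y ⟶ X) (h : i ≫ p = 𝟙 X)
    (hY : Y ∈ w.leN n) : X ∈ w.leN n :=
  w.le_retract ((shiftFunctor C (-n)).map i) ((shiftFunctor C (-n)).map p)
    (by rw [← CategoryTheory.Functor.map_comp, h, CategoryTheory.Functor.map_id]) hY

lemma leN_iso {n : ℤ} {X Y : C} (e : X ≅ Y) (hY : Y ∈ w.leN n) : X ∈ w.leN n :=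
  w.leN_retract e.hom e.inv e.hom_inv_id hY

lemma geN_retract {n : ℤ} {X Y : C} (i : X ⟶ Y) (p : Y ⟶ X) (h : i ≫ p = 𝟙 X)
    (hY : Y ∈ w.geN n) : X ∈ w.geN n :=
  w.ge_retract ((shiftFunctor C (-n)).map i) ((shiftFunctor C (-n)).map p)
    (by rw [← CategoryTheory.Functor.map_comp, h, CategoryTheory.Functor.map_id]) hY

lemma geN_iso {n : ℤ} {X Y : C} (e : X ≅ Y) (hY : Y ∈ w.geN n) : X ∈ w.geN n :=
  w.geN_retract e.hom e.inv e.hom_inv_id hY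

lemma mem_leN_shift (X : C) {n k m : ℤ} (h : n + k = m) :
    X ∈ w.leN n ↔ X⟦k⟧ ∈ w.leN m := by
  have e : X⟦-n⟧ ≅ (X⟦k⟧)⟦-m⟧ := (shiftFunctorAdd' C k (-m) (-n) (by omega)).app X
  constructor
  · intro hX
    exact w.le_iso e.symm hX
  · intro hX
    exact w.le_iso e hX

lemma mem_geN_shift (X : C) {n k m : ℤ} (h : n + k = m) :
    X ∈ w.geN n ↔ X⟦k⟧ ∈ w.geN m := by
  have e : X⟦-n⟧ ≅ (X⟦k⟧)⟦-m⟧ := (shiftFunctorAdd' C k (-m) (-n) (by omega)).app X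
  constructor
  · intro hX
    exact w.ge_iso e.symm hX
  · intro hX
    exact w.ge_iso e hX

lemma mem_leN_zero {X : C} (h : X ∈ w.le) : X ∈ w.leN 0 := by
  have h' : X⟦(0 : ℤ)⟧ ∈ w.le := w.le_iso ((shiftFunctorZero C ℤ).app X) h
  have e : (-0 : ℤ) = 0 := neg_zero
  show X⟦(-0 : ℤ)⟧ ∈ w.le
  rw [e]
  exact h'

lemma mem_geN_one {X : C} (h : X⟦(-1 : ℤ)⟧ ∈ w.ge) : X ∈ w.geN 1 := h

lemma leN_mono {X : C} {n m : ℤ} (h : n ≤ m) (hX : X ∈ w.leN n) : X ∈ w.leN m := by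
  refine Int.le_induction (motive := fun j _ => X ∈ w.leN j) hX (fun k _ ih => ?_) m h
  have h1 : (X⟦-k⟧)⟦(-1 : ℤ)⟧ ∈ w.le := w.le_shift _ ih
  have e : X⟦-(k + 1)⟧ ≅ (X⟦-k⟧)⟦(-1 : ℤ)⟧ :=
    (shiftFunctorAdd' C (-k) (-1) (-(k + 1)) (by omega)).app X
  exact w.le_iso e h1

lemma geN_anti {X : C} {n m : ℤ} (h : n ≤ m) (hX : X ∈ w.geN m) : X ∈ w.geN n := by
  refine Int.le_induction_down (motive := fun j _ => X ∈ w.geN j) hX (fun k _ ih => ?_) n h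
  have h1 : (X⟦-k⟧)⟦(1 : ℤ)⟧ ∈ w.ge := w.ge_shift _ ih
  have e : X⟦-(k - 1)⟧ ≅ (X⟦-k⟧)⟦(1 : ℤ)⟧ :=
    (shiftFunctorAdd' C (-k) 1 (-(k - 1)) (by omega)).app X
  exact w.ge_iso e h1

lemma hom_zero {X Y : C} {a b : ℤ} (hab : a < b) (hX : X ∈ w.leN a) (hY : Y ∈ w.geN b)
    (f : X ⟶ Y) : f = 0 := by
  have hY' : Y ∈ w.geN (a + 1) := w.geN_anti (by omega) hY
  have h2 : (Y⟦-a⟧)⟦(-1 : ℤ)⟧ ∈ w.ge := by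
    have e : Y⟦-(a + 1)⟧ ≅ (Y⟦-a⟧)⟦(-1 : ℤ)⟧ :=
      (shiftFunctorAdd' C (-a) (-1) (-(a + 1)) (by omega)).app Y
    exact w.ge_iso e.symm hY'
  have h0 : (shiftFunctor C (-a)).map f = 0 := w.orthogonal hX h2 _
  apply (shiftFunctor C (-a)).map_injective
  rw [h0, CategoryTheory.Functor.map_zero]

lemma shift_mem_heart {X : C} {n : ℤ} (h1 : X ∈ w.leN n) (h2 : X ∈ w.geN n) :
    X⟦(-n : ℤ)⟧ ∈ w.heart :=
  ⟨(w.mem_leN_shift X (show n + -n = 0 by omega)).1 h1,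
   (w.mem_geN_shift X (show n + -n = 0 by omega)).1 h2⟩

lemma exists_decomp_at (M : C) (a b : ℤ) (hab : a + 1 = b) :
    ∃ (A B : C) (f : A ⟶ M) (g : M ⟶ B) (δ : B ⟶ A⟦(1 : ℤ)⟧),
      (Triangle.mk f g δ ∈ distTriang C) ∧ A ∈ w.leN a ∧ B ∈ w.geN b := by
  obtain ⟨X, Y, f, g, h, mem, hX, hY⟩ := w.exists_decomp (M⟦(-a : ℤ)⟧)
  let T := (Triangle.shiftFunctor C a).obj (Triangle.mk f g h)
  let e := (shiftEquiv C a).counitIso.app M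
  have hT' : Triangle.mk (T.mor₁ ≫ e.hom) (e.inv ≫ T.mor₂) T.mor₃ ∈ distTriang C := by
    refine isomorphic_distinguished _ (Triangle.shift_distinguished _ mem a) _ ?_
    refine Triangle.isoMk _ _ (Iso.refl _) e.symm (Iso.refl _) ?_ ?_ ?_
    all_goals simp [T, e]
    · erw [Category.id_comp]; exact (Category.assoc _ _ _).trans ((congrArg _ ((shiftFunctorCompIsoId C (-a) a (by omega)).app M).hom_inv_id).trans (Category.comp_id _))
    · exact Category.comp_id _
    · erw [CategoryTheory.Functor.map_id, Category.comp_id, Category.id_comp]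
  refine ⟨X⟦a⟧, Y⟦a⟧, T.mor₁ ≫ e.hom, e.inv ≫ T.mor₂, T.mor₃, hT', ?_, ?_⟩
  · exact (w.mem_leN_shift X (show (0 : ℤ) + a = a by omega)).1 (w.mem_leN_zero hX)
  · exact (w.mem_geN_shift Y (show (1 : ℤ) + a = b by omega)).1 (w.mem_geN_one hY)

lemma leN_ext (T : Triangle C) (hT : T ∈ distTriang C) {n : ℤ}
    (h₁ : T.obj₁ ∈ w.leN n) (h₃ : T.obj₃ ∈ w.leN n) : T.obj₂ ∈ w.leN n := by
  obtain ⟨A, B, a, q, δ, mem, hA, hB⟩ := w.exists_decomp_at T.obj₂ n (n + 1) rfl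
  have hq0 : T.mor₁ ≫ q = 0 := w.hom_zero (lt_add_one n) h₁ hB _
  obtain ⟨z, hz⟩ := Triangle.yoneda_exact₂ T hT q hq0
  have hz0 : z = 0 := w.hom_zero (lt_add_one n) h₃ hB z
  have hq : q = 0 := by rw [hz, hz0, comp_zero]
  obtain ⟨s, hs⟩ := Triangle.coyoneda_exact₂ (Triangle.mk a q δ) mem (𝟙 T.obj₂)
    (by change 𝟙 _ ≫ q = 0; rw [hq, comp_zero])
  exact w.leN_retract s a hs.symm hA

end WeightStructure

/-- From a distinguished triangle whose second morphism vanishes, the third morphism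
admits a retraction. -/
lemma retraction_of_mor₂_zero {D : Type*} [Category D] [Preadditive D] [HasZeroObject D]
    [HasShift D ℤ] [∀ n : ℤ, (CategoryTheory.shiftFunctor D n).Additive] [Pretriangulated D]
    (T : Triangle D) (hT : T ∈ distTriang D) (h : T.mor₂ = 0) :
    ∃ ρ : T.obj₁⟦(1 : ℤ)⟧ ⟶ T.obj₃, T.mor₃ ≫ ρ = 𝟙 T.obj₃ := by
  obtain ⟨ρ, hρ⟩ := Triangle.yoneda_exact₂ T.rotate (rot_of_distTriang T hT) (𝟙 T.obj₃)
    (by change T.mor₂ ≫ 𝟙 _ = 0; rw [h, zero_comp])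
  exact ⟨ρ, hρ.symm⟩

section Reflect

variable {C₁ : Type*} [Category C₁] [Preadditive C₁] [HasZeroObject C₁] [HasShift C₁ ℤ]
  [∀ n : ℤ, (CategoryTheory.shiftFunctor C₁ n).Additive] [Pretriangulated C₁]
  {C₂ : Type*} [Category C₂] [Preadditive C₂] [HasZeroObject C₂] [HasShift C₂ ℤ]
  [∀ n : ℤ, (CategoryTheory.shiftFunctor C₂ n).Additive] [Pretriangulated C₂]
  (w₁ : WeightStructure C₁) (w₂ : WeightStructure C₂)
  (r : C₁ ⥤ C₂)

lemma weightExact_leN [r.CommShift ℤ] (hwe : WeightExact w₁ w₂ r) {X : C₁} {n : ℤ}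
    (h : X ∈ w₁.leN n) : r.obj X ∈ w₂.leN n :=
  w₂.le_iso ((r.commShiftIso (-n : ℤ)).app X).symm (hwe.1 _ h)

lemma weightExact_geN [r.CommShift ℤ] (hwe : WeightExact w₁ w₂ r) {X : C₁} {n : ℤ}
    (h : X ∈ w₁.geN n) : r.obj X ∈ w₂.geN n :=
  w₂.ge_iso ((r.commShiftIso (-n : ℤ)).app X).symm (hwe.2 _ h)

lemma reflect_split_mono [r.CommShift ℤ]
    (hfull : ∀ X Y : C₁, X ∈ w₁.heart → Y ∈ w₁.heart →
      ∀ g : r.obj X ⟶ r.obj Y, ∃ f : X ⟶ Y, r.map f = g)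
    (hcons : ∀ X Y : C₁, X ∈ w₁.heart → Y ∈ w₁.heart →
      ∀ f : X ⟶ Y, IsIso (r.map f) → IsIso f)
    {B H : C₁} {n : ℤ} (hB : B⟦(-n : ℤ)⟧ ∈ w₁.heart) (hH : H⟦(-n : ℤ)⟧ ∈ w₁.heart)
    (φ : B ⟶ H) (σ : r.obj H ⟶ r.obj B) (hσ : r.map φ ≫ σ = 𝟙 (r.obj B)) :
    ∃ s : H ⟶ B, φ ≫ s = 𝟙 B := by
  let e := r.commShiftIso (-n : ℤ)
  let σ₀ : r.obj (H⟦(-n : ℤ)⟧) ⟶ r.obj (B⟦(-n : ℤ)⟧) :=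
    e.hom.app H ≫ σ⟦(-n : ℤ)⟧' ≫ e.inv.app B
  have hnat : r.map (φ⟦(-n : ℤ)⟧') ≫ e.hom.app H = e.hom.app B ≫ (r.map φ)⟦(-n : ℤ)⟧' :=
    e.hom.naturality φ
  have h1 : r.map (φ⟦(-n : ℤ)⟧') ≫ σ₀ = 𝟙 (r.obj (B⟦(-n : ℤ)⟧)) := by
    calc r.map (φ⟦(-n : ℤ)⟧') ≫ e.hom.app H ≫ σ⟦(-n : ℤ)⟧' ≫ e.inv.app B
        = (r.map (φ⟦(-n : ℤ)⟧') ≫ e.hom.app H) ≫ σ⟦(-n : ℤ)⟧' ≫ e.inv.app B := by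
          simp only [Category.assoc]
      _ = e.hom.app B ≫ ((r.map φ)⟦(-n : ℤ)⟧' ≫ σ⟦(-n : ℤ)⟧') ≫ e.inv.app B := by
          rw [hnat]; simp only [Category.assoc]
      _ = e.hom.app B ≫ (𝟙 ((r.obj B)⟦(-n : ℤ)⟧)) ≫ e.inv.app B := by
          rw [← CategoryTheory.Functor.map_comp, hσ, CategoryTheory.Functor.map_id]
      _ = 𝟙 _ := by simp [e]
  obtain ⟨ψ₀, hψ₀⟩ := hfull _ _ hH hB σ₀
  have hiso : IsIso (r.map (φ⟦(-n : ℤ)⟧' ≫ ψ₀)) := by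
    rw [r.map_comp, hψ₀, h1]
    infer_instance
  have hiso2 : IsIso (φ⟦(-n : ℤ)⟧' ≫ ψ₀) := hcons _ _ hB hB _ hiso
  have hsplit : φ⟦(-n : ℤ)⟧' ≫ (ψ₀ ≫ inv (φ⟦(-n : ℤ)⟧' ≫ ψ₀)) = 𝟙 _ := by
    rw [← Category.assoc]
    exact IsIso.hom_inv_id _
  obtain ⟨s, hs⟩ := (shiftFunctor C₁ (-n : ℤ)).map_surjective (ψ₀ ≫ inv (φ⟦(-n : ℤ)⟧' ≫ ψ₀))
  refine ⟨s, (shiftFunctor C₁ (-n : ℤ)).map_injective ?_⟩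
  rw [CategoryTheory.Functor.map_comp, hs, CategoryTheory.Functor.map_id]
  exact hsplit

lemma key_step [r.CommShift ℤ] [r.IsTriangulated] (hwe : WeightExact w₁ w₂ r)
    (hfull : ∀ X Y : C₁, X ∈ w₁.heart → Y ∈ w₁.heart →
      ∀ g : r.obj X ⟶ r.obj Y, ∃ f : X ⟶ Y, r.map f = g)
    (hcons : ∀ X Y : C₁, X ∈ w₁.heart → Y ∈ w₁.heart →
      ∀ f : X ⟶ Y, IsIso (r.map f) → IsIso f)
    {M : C₁} {m : ℤ} (hM : M ∈ w₁.leN (m + 1)) (hrM : r.obj M ∈ w₂.leN m) :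
    M ∈ w₁.leN m := by
  obtain ⟨A, B, f, g, δ, mem, hA, hB⟩ := w₁.exists_decomp_at M m (m + 1) rfl
  have hA1 : A⟦(1 : ℤ)⟧ ∈ w₁.leN (m + 1) := (w₁.mem_leN_shift A rfl).1 hA
  have hBle : B ∈ w₁.leN (m + 1) :=
    w₁.leN_ext (Triangle.mk f g δ).rotate (rot_of_distTriang _ mem) hM hA1
  obtain ⟨A', H, f', p, d, mem', hA', hH⟩ := w₁.exists_decomp_at (A⟦(1 : ℤ)⟧) m (m + 1) rfl
  have hA'1 : A'⟦(1 : ℤ)⟧ ∈ w₁.leN (m + 1) := (w₁.mem_leN_shift A' rfl).1 hA'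
  have hHle : H ∈ w₁.leN (m + 1) :=
    w₁.leN_ext (Triangle.mk f' p d).rotate (rot_of_distTriang _ mem') hA1 hA'1
  -- image triangle in C₂
  have hrB : r.obj B ∈ w₂.geN (m + 1) := weightExact_geN w₁ w₂ r hwe hB
  have hrg : r.map g = 0 := w₂.hom_zero (lt_add_one m) hrM hrB _
  obtain ⟨ρ, hρ⟩ := retraction_of_mor₂_zero (r.mapTriangle.obj (Triangle.mk f g δ))
    (r.map_distinguished _ mem) hrg
  -- `hρ : (r.map δ ≫ (r.commShiftIso 1).hom.app A) ≫ ρ = 𝟙 (r.obj B)`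
  let ρ' : r.obj (A⟦(1 : ℤ)⟧) ⟶ r.obj B := (r.commShiftIso (1 : ℤ)).hom.app A ≫ ρ
  have hδρ' : r.map δ ≫ ρ' = 𝟙 (r.obj B) := by
    show r.map δ ≫ (r.commShiftIso (1 : ℤ)).hom.app A ≫ ρ = _
    refine (Category.assoc _ _ _).symm.trans ?_
    exact hρ
  have hrA' : r.obj A' ∈ w₂.leN m := weightExact_leN w₁ w₂ r hwe hA'
  have h0 : r.map f' ≫ ρ' = 0 := w₂.hom_zero (lt_add_one m) hrA' hrB _
  obtain ⟨σ, hσ⟩ := Triangle.yoneda_exact₂ (r.mapTriangle.obj (Triangle.mk f' p d))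
    (r.map_distinguished _ mem') ρ' h0
  -- `hσ : ρ' = r.map p ≫ σ`
  have hcomp : r.map (δ ≫ p) ≫ σ = 𝟙 (r.obj B) := by
    change ρ' = r.map p ≫ σ at hσ
    rw [r.map_comp]; rw [hσ] at hδρ'; exact (Category.assoc _ _ _).trans hδρ'
  have hBh : B⟦(-(m + 1) : ℤ)⟧ ∈ w₁.heart := w₁.shift_mem_heart hBle hB
  have hHh : H⟦(-(m + 1) : ℤ)⟧ ∈ w₁.heart := w₁.shift_mem_heart hHle hH
  obtain ⟨s, hs⟩ := reflect_split_mono w₁ r hfull hcons hBh hHh (δ ≫ p) σ hcomp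
  have hδt : δ ≫ (p ≫ s) = 𝟙 B := by rw [← Category.assoc]; exact hs
  -- conclude that `g = 0`
  have h31 := comp_distTriang_mor_zero₃₁ (Triangle.mk f g δ).rotate.rotate
    (rot_of_distTriang _ (rot_of_distTriang _ mem))
  have hgδ : g⟦(1 : ℤ)⟧' ≫ δ⟦(1 : ℤ)⟧' = 0 := by
    have : (-(g⟦(1 : ℤ)⟧')) ≫ δ⟦(1 : ℤ)⟧' = 0 := h31
    simpa using this
  have hg0 : g = 0 := by
    apply (shiftFunctor C₁ (1 : ℤ)).map_injective
    rw [CategoryTheory.Functor.map_zero]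
    calc g⟦(1 : ℤ)⟧' = g⟦(1 : ℤ)⟧' ≫ (δ ≫ (p ≫ s))⟦(1 : ℤ)⟧' := by
          rw [hδt, CategoryTheory.Functor.map_id, Category.comp_id]
      _ = (g⟦(1 : ℤ)⟧' ≫ δ⟦(1 : ℤ)⟧') ≫ (p ≫ s)⟦(1 : ℤ)⟧' := by
          rw [CategoryTheory.Functor.map_comp, Category.assoc]
      _ = 0 := by rw [hgδ, zero_comp]
  obtain ⟨q, hq⟩ := Triangle.coyoneda_exact₂ (Triangle.mk f g δ) mem (𝟙 M)
    (by change 𝟙 _ ≫ g = 0; rw [hg0, comp_zero])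
  exact w₁.leN_retract q f hq.symm hA

end Reflect

end Helpers

theorem statement5
    (F : Type*) [Field F] [CharZero F]
    {C₁ : Type*} [Category C₁] [Preadditive C₁] [HasZeroObject C₁] [HasShift C₁ ℤ]
    [∀ n : ℤ, (CategoryTheory.shiftFunctor C₁ n).Additive] [Pretriangulated C₁] [CategoryTheory.Linear F C₁]
    {C₂ : Type*} [Category C₂] [Preadditive C₂] [HasZeroObject C₂] [HasShift C₂ ℤ]
    [∀ n : ℤ, (CategoryTheory.shiftFunctor C₂ n).Additive] [Pretriangulated C₂] [CategoryTheory.Linear F C₂]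
    (w₁ : WeightStructure C₁) (w₂ : WeightStructure C₂)
    (r : C₁ ⥤ C₂) [r.Additive] [Functor.Linear F r] [r.CommShift ℤ] [r.IsTriangulated]
    (hbounded : w₁.Bounded)
    (hsemiprimary : SemiprimaryOn w₁.heart) (hpseudoabelian : PseudoAbelianOn w₁.heart)
    (hwe : WeightExact w₁ w₂ r)
    (hfull : ∀ X Y : C₁, X ∈ w₁.heart → Y ∈ w₁.heart →
      ∀ g : r.obj X ⟶ r.obj Y, ∃ f : X ⟶ Y, r.map f = g)
    (hcons : ∀ X Y : C₁, X ∈ w₁.heart → Y ∈ w₁.heart →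
      ∀ f : X ⟶ Y, IsIso (r.map f) → IsIso f)
    (M : C₁) (α : ℤ) :
    M ∈ w₁.leN α ↔ r.obj M ∈ w₂.leN α := by
  constructor
  · intro h
    exact weightExact_leN w₁ w₂ r hwe h
  · intro h
    obtain ⟨m₀, n₀, hmn, hge, hle⟩ := hbounded M
    have key : ∀ k : ℕ, M ∈ w₁.leN (α + k) → M ∈ w₁.leN α := by
      intro k
      induction k with
      | zero =>
        intro hM
        have e : α + ((0 : ℕ) : ℤ) = α := by omega
        rwa [e] at hM
      | succ k ih =>
        intro hM
        apply ih
        have e : α + ((k + 1 : ℕ) : ℤ) = (α + (k : ℕ)) + 1 := by push_cast; omega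
        rw [e] at hM
        exact key_step w₁ w₂ r hwe hfull hcons hM
          (w₂.leN_mono (by omega : α ≤ α + (k : ℕ)) h)
    rcases le_or_gt n₀ α with h' | h'
    · exact w₁.leN_mono h' hle
    · have e : α + ((n₀ - α).toNat : ℤ) = n₀ := by omega
      exact key (n₀ - α).toNat (by rwa [e])

end Paper
end
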